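/- Let F : 𝒜 → ℬ be a triangle functor between triangulated categories and V_F : 𝒜 → 𝒜/Ker F the Verdier quotient functor. Then: (1) if V_F is full, then F satisfies condition (I); (2) if moreover F is objective, or if 𝒜 is a Fitting category, then V_F is full if and only if F satisfies condition (I). -/

import Mathlib

universe v u v' u' v'' u''

open CategoryTheory Limits Pretriangulated

section CatPreamble

variable {𝒜 : Type u} [Category.{v} 𝒜] {ℬ : Type u'} [Category.{v'} ℬ]

/-- An additive functor is objective if every morphism killed by `F` factors through an
object killed by `F`. -/
def ObjectiveFunctor [Limits.HasZeroMorphisms ℬ] (F : 𝒜 ⥤ ℬ) : Prop :=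
  ∀ ⦃X Y : 𝒜⦄ (f : X ⟶ Y), F.map f = 0 →
    ∃ (K : 𝒜) (g : X ⟶ K) (h : K ⟶ Y), Limits.IsZero (F.obj K) ∧ g ≫ h = f

/-- Condition (WSM). -/
def CondWSM (F : 𝒜 ⥤ ℬ) : Prop :=
  ∀ ⦃X Y : 𝒜⦄ (u : X ⟶ Y), IsSplitMono (F.map u) →
    ∃ (X' : 𝒜) (u' : Y ⟶ X'), IsIso (F.map (u ≫ u'))

/-- Condition (I). -/
def CondI (F : 𝒜 ⥤ ℬ) : Prop :=
  ∀ ⦃X Y : 𝒜⦄ (u : X ⟶ Y) (_ : IsIso (F.map u)),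
    ∃ u' : Y ⟶ X, F.map u' = CategoryTheory.inv (F.map u)

/-- Condition (SM). -/
def CondSM (F : 𝒜 ⥤ ℬ) : Prop :=
  ∀ ⦃X Y : 𝒜⦄ (u : X ⟶ Y), IsSplitMono (F.map u) →
    ∃ u' : Y ⟶ X, F.map (u ≫ u') = 𝟙 (F.obj X)

variable (𝒜) in
/-- Iterated composition of an endomorphism. -/
def compPow {X : 𝒜} (f : X ⟶ X) : ℕ → (X ⟶ X)
  | 0 => 𝟙 X
  | n + 1 => f ≫ compPow f n

variable (𝒜) in
/-- A Fitting category: every endomorphism decomposes as an automorphism plus a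
nilpotent endomorphism along a direct sum decomposition of the object. -/
def IsFittingCategory [Preadditive 𝒜] : Prop :=
  ∀ (X : 𝒜) (a : X ⟶ X),
    ∃ (X' X'' : 𝒜) (i' : X' ⟶ X) (p' : X ⟶ X') (i'' : X'' ⟶ X) (p'' : X ⟶ X''),
      i' ≫ p' = 𝟙 X' ∧ i'' ≫ p'' = 𝟙 X'' ∧ i' ≫ p'' = 0 ∧ i'' ≫ p' = 0 ∧
      p' ≫ i' + p'' ≫ i'' = 𝟙 X ∧
      i' ≫ a ≫ p'' = 0 ∧ i'' ≫ a ≫ p' = 0 ∧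
      IsIso (i' ≫ a ≫ p') ∧ ∃ n : ℕ, compPow 𝒜 (i'' ≫ a ≫ p'') (n + 1) = 0

section Triangulated

variable [HasZeroObject 𝒜] [Preadditive 𝒜] [HasShift 𝒜 ℤ]
  [∀ n : ℤ, (shiftFunctor 𝒜 n).Additive] [Pretriangulated 𝒜]
  [HasZeroObject ℬ] [Preadditive ℬ] [HasShift ℬ ℤ]
  [∀ n : ℤ, (shiftFunctor ℬ n).Additive] [Pretriangulated ℬ]

/-- The class of morphisms of `𝒜` whose cone is killed by `F`; the Verdier quotient of
`𝒜` by `Ker F` is the localization of `𝒜` at this class. -/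
def kerW (F : 𝒜 ⥤ ℬ) : MorphismProperty 𝒜 := fun X Y f =>
  ∃ (Z : 𝒜) (g : Y ⟶ Z) (h : Z ⟶ X⟦(1 : ℤ)⟧),
    (Triangle.mk f g h ∈ distTriang 𝒜) ∧ IsZero (F.obj Z)

end Triangulated

end CatPreamble

section Aux

variable {𝒜 : Type u} [Category.{v} 𝒜] {ℬ : Type u'} [Category.{v'} ℬ]

lemma map_compPow (F : 𝒜 ⥤ ℬ) {X : 𝒜} (f : X ⟶ X) (k : ℕ) :
    F.map (compPow 𝒜 f k) = compPow ℬ (F.map f) k := by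
  induction k with
  | zero => simp [compPow]
  | succ n ih => simp [compPow, ih]

lemma compPow_id {X : 𝒜} (k : ℕ) : compPow 𝒜 (𝟙 X) k = 𝟙 X := by
  induction k with
  | zero => rfl
  | succ n ih => simp [compPow, ih]

variable [HasZeroObject 𝒜] [Preadditive 𝒜] [HasShift 𝒜 ℤ]
  [∀ n : ℤ, (shiftFunctor 𝒜 n).Additive] [Pretriangulated 𝒜]
  [HasZeroObject ℬ] [Preadditive ℬ] [HasShift ℬ ℤ]
  [∀ n : ℤ, (shiftFunctor ℬ n).Additive] [Pretriangulated ℬ]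
  (F : 𝒜 ⥤ ℬ) [F.Additive] [F.CommShift ℤ] [F.IsTriangulated]

lemma kerW_iff_isIso {X Y : 𝒜} (u : X ⟶ Y) : kerW F u ↔ IsIso (F.map u) := by
  constructor
  · rintro ⟨Z, g, h, hT, hZ⟩
    exact (Triangle.isZero₃_iff_isIso₁ _ (F.map_distinguished _ hT)).1 hZ
  · intro hu
    obtain ⟨Z, g, h, hT⟩ := distinguished_cocone_triangle u
    exact ⟨Z, g, h, hT, (Triangle.isZero₃_iff_isIso₁ _ (F.map_distinguished _ hT)).2 hu⟩

lemma isZero_F_shift {Z : 𝒜} (hz : IsZero (F.obj Z)) (n : ℤ) : IsZero (F.obj (Z⟦n⟧)) := by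
  have h1 : IsZero ((F.obj Z)⟦n⟧) := by
    rw [IsZero.iff_id_eq_zero] at hz ⊢
    rw [← (shiftFunctor ℬ n).map_id, hz, Functor.map_zero]
  exact h1.of_iso ((F.commShiftIso n).app Z)

instance kerW_isMultiplicative : (kerW F).IsMultiplicative where
  id_mem X := (kerW_iff_isIso F _).2 (by rw [F.map_id]; infer_instance)
  comp_mem f g hf hg := (kerW_iff_isIso F _).2 (by
    rw [F.map_comp]
    have := (kerW_iff_isIso F f).1 hf
    have := (kerW_iff_isIso F g).1 hg
    infer_instance)

instance kerW_hasLeftCalculusOfFractions : (kerW F).HasLeftCalculusOfFractions where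
  exists_leftFraction X Y φ := by
    obtain ⟨Z, f, g, H, mem⟩ := φ.hs
    obtain ⟨Y', s', f', mem'⟩ := distinguished_cocone_triangle₂ (g ≫ φ.f⟦1⟧')
    obtain ⟨b, ⟨hb₁, _⟩⟩ :=
      complete_distinguished_triangle_morphism₂ _ _ H mem' φ.f (𝟙 Z) ((Category.id_comp _).symm)
    exact ⟨MorphismProperty.LeftFraction.mk b s' ⟨_, _, _, mem', mem⟩, hb₁.symm⟩
  ext := by
    rintro X' X Y f₁ f₂ s ⟨Z, g, h, H, mem⟩ hf₁
    have hf₂ : s ≫ (f₁ - f₂) = 0 := by rw [Preadditive.comp_sub, hf₁, sub_self]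
    obtain ⟨q, hq⟩ := Triangle.yoneda_exact₂ _ H _ hf₂
    obtain ⟨Y', r, t, mem'⟩ := distinguished_cocone_triangle q
    refine ⟨Y', r, ?_, ?_⟩
    · exact ⟨_, _, _, rot_of_distTriang _ mem', isZero_F_shift F mem 1⟩
    · have eq := comp_distTriang_mor_zero₁₂ _ mem'
      have hq' : f₁ - f₂ = g ≫ q := hq
      have eq' : q ≫ r = 0 := eq
      rw [← sub_eq_zero, ← Preadditive.sub_comp, hq']
      exact (Category.assoc _ _ _).trans ((congrArg (fun x => g ≫ x) eq').trans comp_zero)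

variable {𝒟 : Type u''} [Category.{v''} 𝒟] (V : 𝒜 ⥤ 𝒟) [V.IsLocalization (kerW F)]

lemma F_map_eq_of_V_map_eq {A B : 𝒜} {f g : A ⟶ B} (hfg : V.map f = V.map g) :
    F.map f = F.map g := by
  have hF : (kerW F).IsInvertedBy F := fun _ _ u hu => (kerW_iff_isIso F u).1 hu
  let G := Localization.lift F hF V
  let e : V ⋙ G ≅ F := Localization.fac F hF V
  have hf := e.hom.naturality f
  have hg := e.hom.naturality g
  simp only [Functor.comp_map] at hf hg
  rw [← cancel_epi (e.hom.app A), ← hf, ← hg, hfg]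

lemma full_imp_condI (hV : V.Full) : CondI F := by
  intro X Y u hu
  have hW : kerW F u := (kerW_iff_isIso F u).2 hu
  have : IsIso (V.map u) := Localization.inverts V (kerW F) u hW
  obtain ⟨u', hu'⟩ := hV.map_surjective (inv (V.map u))
  refine ⟨u', ?_⟩
  have h1 : V.map (u ≫ u') = V.map (𝟙 X) := by
    rw [V.map_comp, hu', IsIso.hom_inv_id, V.map_id]
  have h2 : F.map u ≫ F.map u' = 𝟙 (F.obj X) := by
    rw [← F.map_comp, F_map_eq_of_V_map_eq F V h1, F.map_id]
  exact IsIso.eq_inv_of_hom_inv_id h2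

lemma condI_imp_full (hobj : ObjectiveFunctor F ∨ IsFittingCategory 𝒜) (hI : CondI F) :
    V.Full := by
  constructor
  intro X Y φ
  obtain ⟨fr, hfr⟩ := Localization.exists_leftFraction V (kerW F) φ
  have hs : IsIso (F.map fr.s) := (kerW_iff_isIso F fr.s).1 fr.hs
  have hVs : IsIso (V.map fr.s) := Localization.inverts V (kerW F) fr.s fr.hs
  obtain ⟨s', hs'⟩ := hI fr.s hs
  have cancel : ∀ {W' : 𝒜} (t : fr.Y' ⟶ W'), kerW F t → ∀ (x y : X ⟶ fr.Y'),
      x ≫ t = y ≫ t → V.map x = V.map y := by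
    intro W' t ht x y hxy
    have : IsIso (V.map t) := Localization.inverts V (kerW F) t ht
    rw [← cancel_mono (V.map t), ← V.map_comp, ← V.map_comp, hxy]
  suffices h : ∃ g : X ⟶ Y, V.map (g ≫ fr.s) = V.map fr.f by
    obtain ⟨g, hg⟩ := h
    refine ⟨g, ?_⟩
    rw [hfr, ← cancel_mono (V.map fr.s),
      MorphismProperty.LeftFraction.map_comp_map_s, ← V.map_comp]
    exact hg
  obtain hO | hFit := hobj
  · -- objective case
    set d := s' ≫ fr.s - 𝟙 fr.Y' with hd_def
    have hd : F.map d = 0 := by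
      rw [hd_def, F.map_sub, F.map_comp, hs', F.map_id, IsIso.inv_hom_id, sub_self]
    obtain ⟨K, uk, vk, hK, huv⟩ := hO d hd
    obtain ⟨Cc, t, w, hT⟩ := distinguished_cocone_triangle vk
    have ht : kerW F t := (kerW_iff_isIso F t).2
      ((Triangle.isZero₁_iff_isIso₂ _ (F.map_distinguished _ hT)).1 hK)
    have hvt : vk ≫ t = 0 := comp_distTriang_mor_zero₁₂ _ hT
    have hdt : d ≫ t = 0 := by rw [← huv, Category.assoc, hvt, comp_zero]
    have hst : s' ≫ fr.s ≫ t = t := by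
      have h1 : s' ≫ fr.s = 𝟙 fr.Y' + d := by rw [hd_def]; abel
      rw [← Category.assoc, h1, Preadditive.add_comp, Category.id_comp, hdt, add_zero]
    refine ⟨fr.f ≫ s', cancel t ht _ _ ?_⟩
    simp only [Category.assoc, hst]
  · -- Fitting case
    obtain ⟨Z', Z'', i', p', i'', p'', h1, h2, h3, h4, h5, h6, h7, h8, n, h9⟩ :=
      hFit fr.Y' (s' ≫ fr.s)
    have hFa : F.map (s' ≫ fr.s) = 𝟙 (F.obj fr.Y') := by
      rw [F.map_comp, hs', IsIso.inv_hom_id]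
    have hz'' : IsZero (F.obj Z'') := by
      rw [IsZero.iff_id_eq_zero]
      have e1 : F.map (i'' ≫ (s' ≫ fr.s) ≫ p'') = 𝟙 (F.obj Z'') := by
        rw [F.map_comp, F.map_comp, hFa, Category.id_comp, ← F.map_comp, h2, F.map_id]
      have e2 : F.map (compPow 𝒜 (i'' ≫ (s' ≫ fr.s) ≫ p'') (n + 1)) = 𝟙 (F.obj Z'') := by
        rw [map_compPow, e1, compPow_id]
      rw [← e2, h9, F.map_zero]
    have hp'' : F.map p'' = 0 := hz''.eq_of_tgt _ _
    have hip : F.map i' ≫ F.map p' = 𝟙 (F.obj Z') := by rw [← F.map_comp, h1, F.map_id]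
    have hpi : F.map p' ≫ F.map i' = 𝟙 (F.obj fr.Y') := by
      have h5' := congrArg F.map h5
      rw [F.map_add, F.map_comp, F.map_comp, hp'', zero_comp, add_zero, F.map_id] at h5'
      exact h5'
    have hFp' : IsIso (F.map p') := ⟨F.map i', hpi, hip⟩
    have hWp' : kerW F p' := (kerW_iff_isIso F p').2 hFp'
    have hia : i' ≫ (s' ≫ fr.s) = (i' ≫ (s' ≫ fr.s) ≫ p') ≫ i' := by
      calc i' ≫ (s' ≫ fr.s) = (i' ≫ (s' ≫ fr.s)) ≫ 𝟙 fr.Y' := by rw [Category.comp_id]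
        _ = (i' ≫ (s' ≫ fr.s)) ≫ (p' ≫ i' + p'' ≫ i'') := by rw [h5]
        _ = (i' ≫ (s' ≫ fr.s) ≫ p') ≫ i' + (i' ≫ (s' ≫ fr.s) ≫ p'') ≫ i'' := by
            rw [Preadditive.comp_add]
            simp only [Category.assoc]
        _ = (i' ≫ (s' ≫ fr.s) ≫ p') ≫ i' := by rw [h6, zero_comp, add_zero]
    refine ⟨fr.f ≫ p' ≫ inv (i' ≫ (s' ≫ fr.s) ≫ p') ≫ i' ≫ s', cancel p' hWp' _ _ ?_⟩
    have key : inv (i' ≫ (s' ≫ fr.s) ≫ p') ≫ i' ≫ (s' ≫ fr.s) ≫ p' = 𝟙 Z' :=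
      IsIso.inv_hom_id _
    calc ((fr.f ≫ p' ≫ inv (i' ≫ (s' ≫ fr.s) ≫ p') ≫ i' ≫ s') ≫ fr.s) ≫ p'
        = fr.f ≫ p' ≫ (inv (i' ≫ (s' ≫ fr.s) ≫ p') ≫ i' ≫ (s' ≫ fr.s) ≫ p') := by
          simp only [Category.assoc]
      _ = fr.f ≫ p' := by rw [key, Category.comp_id]

end Aux

/-- Theorem [RZ2, 1.2]. Let `F : 𝒜 → ℬ` be a triangle functor and
`V : 𝒜 → 𝒜/Ker F` the Verdier quotient functor.  (1) If `V` is full then `F` satisfies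
condition (I).  (2) If `F` is objective, or if `𝒜` is a Fitting category, then `V` is
full iff `F` satisfies condition (I). -/
theorem stmt12
    {𝒜 : Type u} [Category.{v} 𝒜] [HasZeroObject 𝒜] [Preadditive 𝒜] [HasShift 𝒜 ℤ]
    [∀ n : ℤ, (CategoryTheory.shiftFunctor 𝒜 n).Additive] [Pretriangulated 𝒜]
    {ℬ : Type u'} [Category.{v'} ℬ] [HasZeroObject ℬ] [Preadditive ℬ] [HasShift ℬ ℤ]
    [∀ n : ℤ, (CategoryTheory.shiftFunctor ℬ n).Additive] [Pretriangulated ℬ]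
    (F : 𝒜 ⥤ ℬ) [F.Additive] [F.CommShift ℤ] [F.IsTriangulated]
    {𝒟 : Type u''} [Category.{v''} 𝒟]
    (V : 𝒜 ⥤ 𝒟) [V.IsLocalization (kerW F)] :
    (V.Full → CondI F) ∧
    ((ObjectiveFunctor F ∨ IsFittingCategory 𝒜) → (V.Full ↔ CondI F)) := by
  refine ⟨fun h => full_imp_condI F V h, fun hobj =>
    ⟨fun h => full_imp_condI F V h, fun hI => condI_imp_full F V hobj hI⟩⟩
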